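/- Let L ∈ SL(d,ℤ) be irreducible (characteristic polynomial irreducible over ℚ) and let V ⊂ ℝ^d be a nonzero L-invariant real subspace. Then the image of V under the projection ℝ^d → 𝕋^d = ℝ^d/ℤ^d is dense in 𝕋^d. -/

import Mathlib

open Filter Topology Polynomial Module Submodule

section Aux

lemma discrete_of_no_line {E : Type*} [NormedAddCommGroup E] [NormedSpace ℝ E]
    [ProperSpace E] (G : AddSubgroup E) (hG : IsClosed (G : Set E))
    (hline : ∀ x : E, (∀ t : ℝ, t • x ∈ G) → x = 0) :
    ∃ ε > 0, ∀ g ∈ G, ‖g‖ < ε → g = 0 := by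
  by_contra h
  push_neg at h
  choose g hgG hgn hg0 using fun k : ℕ => h (1/(k+1)) (by positivity)
  set u : ℕ → E := fun k => ‖g k‖⁻¹ • g k with hu_def
  have hgpos : ∀ k, (0:ℝ) < ‖g k‖ := fun k => norm_pos_iff.mpr (hg0 k)
  have hu : ∀ k, u k ∈ Metric.sphere (0:E) 1 := by
    intro k
    simp only [u, Metric.mem_sphere, dist_zero_right, norm_smul, norm_inv, norm_norm]
    rw [inv_mul_cancel₀ (hgpos k).ne']
  obtain ⟨a, ha, φ, hφ, hconv⟩ := (isCompact_sphere (0:E) 1).tendsto_subseq hu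
  have ha0 : a ≠ 0 := by
    intro h0
    rw [h0] at ha
    simp at ha
  refine ha0 (hline a fun t => ?_)
  -- r k = ‖g (φ k)‖ tends to 0
  have hr0 : Tendsto (fun k => ‖g (φ k)‖) atTop (𝓝 0) := by
    refine squeeze_zero (fun k => (norm_nonneg _)) (fun k => (hgn (φ k)).le.trans ?_)
      tendsto_one_div_add_atTop_nhds_zero_nat
    have hk : (k:ℝ) + 1 ≤ (φ k : ℝ) + 1 := by exact_mod_cast Nat.succ_le_succ hφ.le_apply
    have : (0:ℝ) < (k:ℝ)+1 := by positivity
    exact one_div_le_one_div_of_le this hk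
  have hcoef : Tendsto (fun k => (⌊t / ‖g (φ k)‖⌋ : ℝ) * ‖g (φ k)‖) atTop (𝓝 t) := by
    have : Tendsto (fun k => (⌊t / ‖g (φ k)‖⌋ : ℝ) * ‖g (φ k)‖ - t) atTop (𝓝 0) := by
      apply squeeze_zero_norm (a := fun k => ‖g (φ k)‖) _ hr0
      intro k
      set r := ‖g (φ k)‖
      have hr : (0:ℝ) < r := hgpos _
      have h1 : (⌊t / r⌋ : ℝ) ≤ t / r := Int.floor_le _
      have h2 : t / r - 1 < ⌊t / r⌋ := by
        have := Int.lt_floor_add_one (t / r)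
        linarith
      rw [Real.norm_eq_abs, abs_le]
      constructor <;> nlinarith [div_mul_cancel₀ t hr.ne']
    have := this.add_const t
    simpa using this
  have hmem : ∀ k, ((⌊t / ‖g (φ k)‖⌋ : ℝ) * ‖g (φ k)‖) • u (φ k) ∈ G := by
    intro k
    have : ((⌊t / ‖g (φ k)‖⌋ : ℝ) * ‖g (φ k)‖) • u (φ k) = ⌊t / ‖g (φ k)‖⌋ • g (φ k) := by
      rw [← Int.cast_smul_eq_zsmul ℝ]
      simp only [u, smul_smul]
      congr 1
      rw [mul_assoc, mul_inv_cancel₀ (hgpos _).ne', mul_one]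
    rw [this]
    exact zsmul_mem (hgG (φ k)) _
  have hlim : Tendsto (fun k => ((⌊t / ‖g (φ k)‖⌋ : ℝ) * ‖g (φ k)‖) • u (φ k)) atTop (𝓝 (t • a)) :=
    hcoef.smul hconv
  exact hG.mem_of_tendsto hlim (Eventually.of_forall hmem)


lemma pow_mulVec_mem {d : ℕ} (A : Matrix (Fin d) (Fin d) ℚ)
    (T : Submodule ℚ (Fin d → ℚ)) (hT : ∀ v ∈ T, A.mulVec v ∈ T)
    (v : Fin d → ℚ) (hv : v ∈ T) (k : ℕ) : (A ^ k).mulVec v ∈ T := by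
  induction k with
  | zero => simpa using hv
  | succ n ih =>
      rw [pow_succ', ← Matrix.mulVec_mulVec]
      exact hT _ ih

lemma aeval_mulVec_mem {d : ℕ} (A : Matrix (Fin d) (Fin d) ℚ)
    (T : Submodule ℚ (Fin d → ℚ)) (hT : ∀ v ∈ T, A.mulVec v ∈ T)
    (v : Fin d → ℚ) (hv : v ∈ T) (p : ℚ[X]) : (aeval A p).mulVec v ∈ T := by
  rw [Polynomial.aeval_eq_sum_range]
  rw [Matrix.sum_mulVec]
  refine Submodule.sum_mem _ fun k _ => ?_
  rw [Matrix.smul_mulVec]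
  exact Submodule.smul_mem _ _ (pow_mulVec_mem A T hT v hv k)

lemma invariant_eq_top_of_irreducible_charpoly {d : ℕ} (A : Matrix (Fin d) (Fin d) ℚ)
    (hirr : Irreducible A.charpoly) (T : Submodule ℚ (Fin d → ℚ))
    (hT : ∀ v ∈ T, A.mulVec v ∈ T) (hT0 : T ≠ ⊥) : T = ⊤ := by
  classical
  obtain ⟨v, hvT, hv0⟩ := Submodule.exists_mem_ne_zero_of_ne_bot hT0
  -- the annihilator ideal of v
  let J : Ideal ℚ[X] :=
    { carrier := {p | (aeval A p).mulVec v = 0}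
      add_mem' := by
        intro p q hp hq
        simp only [Set.mem_setOf_eq, map_add, Matrix.add_mulVec] at *
        rw [hp, hq, add_zero]
      zero_mem' := by simp
      smul_mem' := by
        intro q p hp
        simp only [Set.mem_setOf_eq, smul_eq_mul, map_mul, ← Matrix.mulVec_mulVec] at *
        rw [hp, Matrix.mulVec_zero] }
  have hcharJ : A.charpoly ∈ J := by
    show (aeval A A.charpoly).mulVec v = 0
    rw [Matrix.aeval_self_charpoly, Matrix.zero_mulVec]
  have honeJ : (1 : ℚ[X]) ∉ J := by
    intro h1
    have : (aeval A (1:ℚ[X])).mulVec v = 0 := h1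
    simp only [map_one, Matrix.one_mulVec] at this
    exact hv0 this
  -- J is principal; its generator divides charpoly; since charpoly irreducible and J ≠ ⊤,
  -- charpoly divides every element of J
  have hdvd : ∀ p ∈ J, A.charpoly ∣ p := by
    have hgen := (Submodule.IsPrincipal.mem_iff_generator_dvd J).mp hcharJ
    obtain ⟨c, hc⟩ := hgen
    rcases hirr.isUnit_or_isUnit hc with hu | hu
    · exfalso
      apply honeJ
      obtain ⟨w, hw⟩ := hu.exists_right_inv
      have : Submodule.IsPrincipal.generator J * w ∈ J :=
        Ideal.mul_mem_right _ _ (Submodule.IsPrincipal.generator_mem J)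
      rwa [hw] at this
    · intro p hp
      have h1 := (Submodule.IsPrincipal.mem_iff_generator_dvd J).mp hp
      have h2 : A.charpoly ∣ Submodule.IsPrincipal.generator J := by
        refine ⟨(hu.unit⁻¹ : ℚ[X]ˣ), ?_⟩
        rw [hc, mul_assoc]
        norm_num [hu.unit_spec]
      exact h2.trans h1
  -- the vectors v, Av, ..., A^(d-1) v are linearly independent
  have hdeg : A.charpoly.natDegree = d := by
    simpa using Matrix.charpoly_natDegree_eq_dim A
  have hind : LinearIndependent ℚ (fun k : Fin d => (A ^ (k : ℕ)).mulVec v) := by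
    rw [Fintype.linearIndependent_iff]
    intro c hc k
    set p : ℚ[X] := ∑ k : Fin d, C (c k) * X ^ (k : ℕ) with hp_def
    have hpJ : p ∈ J := by
      show (aeval A p).mulVec v = 0
      rw [hp_def, map_sum, Matrix.sum_mulVec, ← hc]
      refine Finset.sum_congr rfl fun j _ => ?_
      rw [map_mul, aeval_C, aeval_X_pow, ← Algebra.smul_def, Matrix.smul_mulVec]
    have hp0 : p = 0 := by
      by_contra hp0
      have hdpos : 0 < d := k.pos
      have hle : p.natDegree < d := by
        have : p.natDegree ≤ d - 1 := by
          apply Polynomial.natDegree_sum_le_of_forall_le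
          intro j _
          refine (Polynomial.natDegree_C_mul_le _ _).trans ?_
          simpa using Nat.le_sub_one_of_lt j.2
        omega
      have := Polynomial.natDegree_le_of_dvd (hdvd p hpJ) hp0
      omega
    have : p.coeff (k : ℕ) = c k := by
      rw [hp_def, Polynomial.finset_sum_coeff]
      rw [Finset.sum_eq_single k]
      · simp
      · intro j _ hj
        rw [Polynomial.coeff_C_mul, Polynomial.coeff_X_pow, if_neg, mul_zero]
        exact fun h => hj (Fin.ext (by omega))
      · simp
    rw [← this, hp0, Polynomial.coeff_zero]
  have hsub : ∀ k : Fin d, (A ^ (k:ℕ)).mulVec v ∈ T := fun k =>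
    pow_mulVec_mem A T hT v hvT _
  -- hence finrank T ≥ d
  have hrank : d ≤ Module.finrank ℚ T := by
    have hind' : LinearIndependent ℚ (fun k : Fin d =>
        (⟨(A ^ (k:ℕ)).mulVec v, hsub k⟩ : T)) := by
      refine LinearIndependent.of_comp T.subtype ?_
      exact hind
    simpa using hind'.fintype_card_le_finrank
  have : Module.finrank ℚ T = d := le_antisymm (by simpa using T.finrank_le) hrank
  apply Submodule.eq_top_of_finrank_eq
  simpa using this

lemma W_eq_span_intPoints (d : ℕ) (H : AddSubgroup (Fin d → ℝ)) (hHclosed : IsClosed (H : Set (Fin d → ℝ)))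
    (ZdM : Submodule ℤ (Fin d → ℝ))
        (hsingle : ∀ i : Fin d, Pi.single i (1:ℝ) ∈ ZdM)
    (hZH : ∀ x ∈ ZdM, x ∈ H)
    (W : Submodule ℝ (Fin d → ℝ))
    (hWmem : ∀ x, x ∈ W ↔ ∀ t : ℝ, t • x ∈ H)
    :
    W = Submodule.span ℝ ((ZdM : Set (Fin d → ℝ)) ∩ (W : Set (Fin d → ℝ))) := by
  classical
  have hWH : ∀ x ∈ W, x ∈ H := fun x hx => by simpa using (hWmem x).mp hx 1
  obtain ⟨U, hUcompl⟩ := Submodule.exists_isCompl W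
  set p : (Fin d → ℝ) →ₗ[ℝ] ↥U := U.linearProjOfIsCompl W hUcompl.symm with hp
  have hpker : ∀ x, p x = 0 ↔ x ∈ W := fun x =>
    Submodule.linearProjOfIsCompl_apply_eq_zero_iff hUcompl.symm
  have hsubW : ∀ x : Fin d → ℝ, x - (p x : Fin d → ℝ) ∈ W := by
    intro x
    have := Submodule.projection_add_projection_eq_self hUcompl x
    have h2 : x - (p x : Fin d → ℝ) = ↑(W.linearProjOfIsCompl U hUcompl x) :=
      sub_eq_of_eq_add this.symm
    rw [h2]
    exact (W.linearProjOfIsCompl U hUcompl x).2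
  have hpH : ∀ x ∈ H, (p x : Fin d → ℝ) ∈ H := by
    intro x hx
    have : (p x : Fin d → ℝ) = x - (x - p x) := by abel
    rw [this]
    exact H.sub_mem hx (hWH _ (hsubW x))
  -- the subgroup H ∩ U is discrete
  set G : AddSubgroup (Fin d → ℝ) := H ⊓ U.toAddSubgroup with hG
  have hGclosed : IsClosed (G : Set (Fin d → ℝ)) := by
    have : (G : Set (Fin d → ℝ)) = (H : Set (Fin d → ℝ)) ∩ (U : Set (Fin d → ℝ)) := rfl
    rw [this]
    exact hHclosed.inter U.closed_of_finiteDimensional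
  have hGline : ∀ x : Fin d → ℝ, (∀ t : ℝ, t • x ∈ G) → x = 0 := by
    intro x hx
    have hxW : x ∈ W := (hWmem x).mpr fun t => (hx t).1
    have hxU : x ∈ U := by simpa using (hx 1).2
    have hmem : x ∈ W ⊓ U := Submodule.mem_inf.mpr ⟨hxW, hxU⟩
    rw [hUcompl.disjoint.eq_bot] at hmem
    simpa using hmem
  obtain ⟨ε, hε, hsep⟩ := discrete_of_no_line G hGclosed hGline
  -- the lattice Λ' = p(ZdM) in U
  set Λ : Submodule ℤ ↥U := ZdM.map (p.restrictScalars ℤ) with hΛ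
  have hΛG : ∀ x : ↥U, x ∈ Λ → (x : Fin d → ℝ) ∈ G := by
    rintro x ⟨z, hz, rfl⟩
    exact ⟨hpH z (hZH z hz), (p z).2⟩
  have hdisc : DiscreteTopology ↥Λ := by
    apply discreteTopology_of_isOpen_singleton_zero
    have heq : ({0} : Set ↥Λ) = (fun x : ↥Λ => ((x : ↥U) : Fin d → ℝ)) ⁻¹' Metric.ball 0 ε := by
      ext x
      simp only [Set.mem_singleton_iff, Set.mem_preimage, Metric.mem_ball, dist_zero_right]
      constructor
      · rintro rfl; simpa using hε
      · intro hlt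
        have := hsep _ (hΛG _ x.2) hlt
        ext1
        ext1
        simpa using this
    rw [heq]
    exact Metric.isOpen_ball.preimage (continuous_subtype_val.comp continuous_subtype_val)
  have hΛspan : Submodule.span ℝ (Λ : Set ↥U) = ⊤ := by
    have hZspan : Submodule.span ℝ (ZdM : Set (Fin d → ℝ)) = ⊤ := by
      refine top_unique ?_
      rw [← (Pi.basisFun ℝ (Fin d)).span_eq]
      refine Submodule.span_le.mpr ?_
      rintro _ ⟨i, rfl⟩
      refine Submodule.subset_span ?_
      simpa using hsingle i
    have hsurj : Function.Surjective p := by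
      rw [← LinearMap.range_eq_top, hp]
      exact Submodule.linearProjOfIsCompl_range _
    calc Submodule.span ℝ (Λ : Set ↥U) = Submodule.span ℝ (p '' (ZdM : Set (Fin d → ℝ))) := rfl
      _ = Submodule.map p (Submodule.span ℝ (ZdM : Set (Fin d → ℝ))) := (Submodule.map_span p _).symm
      _ = ⊤ := by rw [hZspan, Submodule.map_top, LinearMap.range_eq_top.mpr hsurj]
  haveI : IsZLattice ℝ Λ := ⟨hΛspan⟩
  haveI : Module.Finite ℤ ↥Λ := ZLattice.module_finite ℝ Λ
  haveI : Module.Free ℤ ↥Λ := ZLattice.module_free ℝ Λ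
  set m := finrank ℝ ↥U with hm
  have hrankΛ : finrank ℤ ↥Λ = m := ZLattice.rank ℝ Λ
  set b := Module.Free.chooseBasis ℤ ↥Λ with hb
  set ι := Module.Free.ChooseBasisIndex ℤ ↥Λ with hι
  have hcard : Fintype.card ι = m := by
    rw [← hrankΛ, finrank_eq_card_chooseBasisIndex]
  -- lift the basis vectors to integer vectors
  have hlift : ∀ i : ι, ∃ z, z ∈ ZdM ∧ p z = (b i : ↥U) := by
    intro i
    obtain ⟨z, hz, hz2⟩ := (b i).2
    exact ⟨z, hz, hz2⟩
  choose n hnZ hnp using hlift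
  -- every element of ZdM is in span(ZdM ∩ W) + span(range n)
  set W₀ : Submodule ℝ (Fin d → ℝ) :=
    Submodule.span ℝ ((ZdM : Set (Fin d → ℝ)) ∩ (W : Set (Fin d → ℝ))) with hW₀
  have hcover : ∀ x ∈ ZdM, x ∈ W₀ ⊔ Submodule.span ℝ (Set.range n) := by
    intro x hx
    set px : ↥Λ := ⟨p x, Submodule.mem_map_of_mem hx⟩ with hpx
    set c : ι → ℤ := fun i => b.repr px i with hc
    set y : Fin d → ℝ := ∑ i, c i • n i with hy
    have hyZ : y ∈ ZdM := Submodule.sum_mem _ fun i _ => ZdM.smul_mem _ (hnZ i)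
    have hpy : p y = p x := by
      have : p y = ∑ i, c i • p (n i) := by
        rw [hy, map_sum]
        exact Finset.sum_congr rfl fun i _ => by rw [map_zsmul]
      rw [this]
      have : ∑ i, c i • p (n i) = ∑ i, c i • (b i : ↥U) := by
        exact Finset.sum_congr rfl fun i _ => by rw [hnp]
      rw [this]
      have := b.sum_repr px
      calc ∑ i, c i • (b i : ↥U) = ((∑ i, c i • b i : ↥Λ) : ↥U) := by
            push_cast; rfl
        _ = ((px : ↥Λ) : ↥U) := by rw [b.sum_repr px]
        _ = p x := rfl
    have hxy : x - y ∈ W := by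
      rw [← hpker]
      rw [map_sub, hpy, sub_self]
    have hxyZ : x - y ∈ ZdM := ZdM.sub_mem hx hyZ
    have h1 : x - y ∈ W₀ := Submodule.subset_span ⟨hxyZ, hxy⟩
    have h2 : y ∈ Submodule.span ℝ (Set.range n) := by
      rw [hy]
      refine Submodule.sum_mem _ fun i _ => ?_
      rw [← Int.cast_smul_eq_zsmul ℝ]
      exact Submodule.smul_mem _ _ (Submodule.subset_span ⟨i, rfl⟩)
    have : x = (x - y) + y := by abel
    rw [this]
    exact Submodule.add_mem _ (Submodule.mem_sup_left h1) (Submodule.mem_sup_right h2)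
  -- dimension count
  have htop : W₀ ⊔ Submodule.span ℝ (Set.range n) = ⊤ := by
    refine top_unique ?_
    have hZspan : Submodule.span ℝ (ZdM : Set (Fin d → ℝ)) = ⊤ := by
      refine top_unique ?_
      rw [← (Pi.basisFun ℝ (Fin d)).span_eq]
      refine Submodule.span_le.mpr ?_
      rintro _ ⟨i, rfl⟩
      refine Submodule.subset_span ?_
      simpa using hsingle i
    rw [← hZspan]
    exact Submodule.span_le.mpr fun x hx => hcover x hx
  have hWle : W₀ ≤ W := Submodule.span_le.mpr fun x hx => hx.2
  have hdim : finrank ℝ W ≤ finrank ℝ W₀ := by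
    have h1 : finrank ℝ (W₀ ⊔ Submodule.span ℝ (Set.range n) : Submodule ℝ (Fin d → ℝ)) = d := by
      rw [htop]
      simp [finrank_top]
    have h2 : finrank ℝ (W₀ ⊔ Submodule.span ℝ (Set.range n) : Submodule ℝ (Fin d → ℝ)) ≤
        finrank ℝ W₀ + finrank ℝ (Submodule.span ℝ (Set.range n)) := by
      have := Submodule.finrank_sup_add_finrank_inf_eq W₀ (Submodule.span ℝ (Set.range n))
      omega
    have h3 : finrank ℝ (Submodule.span ℝ (Set.range n)) ≤ m := by
      calc finrank ℝ (Submodule.span ℝ (Set.range n)) = Set.finrank ℝ (Set.range n) := rfl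
        _ ≤ Fintype.card ι := finrank_range_le_card (R := ℝ) n
        _ = m := hcard
    have h4 : finrank ℝ W + m = d := by
      have := Submodule.finrank_add_eq_of_isCompl hUcompl
      simpa [hm] using this
    omega
  exact (Submodule.eq_of_le_of_finrank_le hWle hdim).symm

lemma W_top_of_rational_point {d : ℕ} (L : Matrix (Fin d) (Fin d) ℤ)
    (hirr : Irreducible ((L.map ((↑) : ℤ → ℚ)).charpoly))
    (W : Submodule ℝ (Fin d → ℝ))
    (hWA : ∀ x ∈ W, (L.map ((↑) : ℤ → ℝ)).mulVec x ∈ W)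
    (hex : ∃ y : Fin d → ℚ, (fun i => ((y i : ℚ) : ℝ)) ∈ W ∧ y ≠ 0) :
    W = ⊤ := by
  classical
  set cst : (Fin d → ℚ) → (Fin d → ℝ) := fun y => fun i => ((y i : ℚ) : ℝ) with hcst
  set T : Submodule ℚ (Fin d → ℚ) :=
    { carrier := {y | cst y ∈ W}
      add_mem' := by
        intro y z hy hz
        have : cst (y + z) = cst y + cst z := by
          funext i; simp [hcst]
        show cst (y + z) ∈ W
        rw [this]
        exact W.add_mem hy hz
      zero_mem' := by
        show cst 0 ∈ W
        have : cst 0 = 0 := by funext i; simp [hcst]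
        rw [this]; exact W.zero_mem
      smul_mem' := by
        intro c y hy
        show cst (c • y) ∈ W
        have : cst (c • y) = (c : ℝ) • cst y := by
          funext i; simp [hcst]
        rw [this]
        exact W.smul_mem _ hy } with hT
  have hTA : ∀ y ∈ T, (L.map ((↑) : ℤ → ℚ)).mulVec y ∈ T := by
    intro y hy
    show cst ((L.map ((↑) : ℤ → ℚ)).mulVec y) ∈ W
    have : cst ((L.map ((↑) : ℤ → ℚ)).mulVec y) = (L.map ((↑) : ℤ → ℝ)).mulVec (cst y) := by
      funext i
      simp only [hcst, Matrix.mulVec, dotProduct, Matrix.map_apply]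
      push_cast
      ring
    rw [this]
    exact hWA _ hy
  have hT0 : T ≠ ⊥ := by
    obtain ⟨y, hyW, hy0⟩ := hex
    intro hbot
    exact hy0 (by simpa [hbot] using (show y ∈ T from hyW))
  have hTtop : T = ⊤ := invariant_eq_top_of_irreducible_charpoly _ hirr T hTA hT0
  refine top_unique ?_
  rw [← (Pi.basisFun ℝ (Fin d)).span_eq]
  refine Submodule.span_le.mpr ?_
  rintro _ ⟨i, rfl⟩
  have hmem : (Pi.single i (1:ℚ) : Fin d → ℚ) ∈ T := hTtop ▸ trivial
  have : cst (Pi.single i (1:ℚ)) = Pi.basisFun ℝ (Fin d) i := by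
    funext j
    simp [hcst, Pi.single_apply]
    split <;> simp
  rw [← this]
  exact hmem

end Aux

/-- If `L ∈ SL(d,ℤ)` is irreducible (characteristic polynomial irreducible over `ℚ`) and
`V ⊆ ℝ^d` is a nonzero `L`-invariant real subspace, then the image of `V` under the
projection `ℝ^d → 𝕋^d = ℝ^d/ℤ^d` is dense in the torus. -/
theorem dense_proj_of_invariant_subspace_of_irreducible
    (d : ℕ) (L : Matrix (Fin d) (Fin d) ℤ) (hL : L.det = 1)
    (hirr : Irreducible (L.map ((↑) : ℤ → ℚ)).charpoly)
    (V : Submodule ℝ (Fin d → ℝ))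
    (hVinv : ∀ v ∈ V, (L.map ((↑) : ℤ → ℝ)).mulVec v ∈ V)
    (hV0 : V ≠ ⊥) :
    Dense ((fun x : Fin d → ℝ => fun i => (x i : AddCircle (1 : ℝ))) '' (V : Set (Fin d → ℝ))) := by
  classical
  set A : Matrix (Fin d) (Fin d) ℝ := L.map ((↑) : ℤ → ℝ) with hA
  -- the subgroup of integer points
  set ZdM : Submodule ℤ (Fin d → ℝ) :=
    { carrier := {x | ∀ i, ∃ n : ℤ, x i = (n : ℝ)}
      add_mem' := by
        rintro x y hx hy i
        obtain ⟨n, hn⟩ := hx i; obtain ⟨m, hm⟩ := hy i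
        exact ⟨n + m, by push_cast [Pi.add_apply, hn, hm]; ring⟩
      zero_mem' := fun i => ⟨0, by simp⟩
      smul_mem' := by
        rintro c x hx i
        obtain ⟨n, hn⟩ := hx i
        exact ⟨c * n, by rw [Pi.smul_apply, hn, zsmul_eq_mul]; push_cast; ring⟩ } with hZdM
  set S : AddSubgroup (Fin d → ℝ) := V.toAddSubgroup ⊔ ZdM.toAddSubgroup with hS
  set H : AddSubgroup (Fin d → ℝ) := S.topologicalClosure with hH
  have hHclosed : IsClosed (H : Set (Fin d → ℝ)) := S.isClosed_topologicalClosure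
  have hSH : ∀ x ∈ S, x ∈ H := fun x hx => S.le_topologicalClosure hx
  have hVS : ∀ x ∈ V, x ∈ S := fun x hx =>
    (le_sup_left : V.toAddSubgroup ≤ S) hx
  have hZS : ∀ x ∈ ZdM, x ∈ S := fun x hx =>
    (le_sup_right : ZdM.toAddSubgroup ≤ S) hx
  -- the largest subspace contained in H
  set W : Submodule ℝ (Fin d → ℝ) :=
    { carrier := {x | ∀ t : ℝ, t • x ∈ H}
      add_mem' := by
        intro x y hx hy t
        rw [smul_add]
        exact H.add_mem (hx t) (hy t)
      zero_mem' := fun t => by simpa using H.zero_mem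
      smul_mem' := by
        intro c x hx t
        rw [smul_smul]
        exact hx (t * c) } with hW
  have hWH : ∀ x ∈ W, x ∈ H := fun x hx => by simpa using hx 1
  have hVW : V ≤ W := by
    intro v hv t
    exact hSH _ (hVS _ (V.smul_mem t hv))
  -- invariance of everything under A
  have hZA : ∀ x ∈ ZdM, A.mulVec x ∈ ZdM := by
    intro x hx
    choose n hn using hx
    intro i
    refine ⟨∑ j, L i j * n j, ?_⟩
    rw [Matrix.mulVec, dotProduct]
    push_cast
    exact Finset.sum_congr rfl fun j _ => by rw [hn j, hA, Matrix.map_apply]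
  have hSA : ∀ x ∈ S, A.mulVec x ∈ S := by
    intro x hx
    rw [hS, AddSubgroup.mem_sup] at hx
    obtain ⟨v, hv, z, hz, rfl⟩ := hx
    rw [Matrix.mulVec_add]
    exact S.add_mem (hVS _ (hVinv v hv)) (hZS _ (hZA z hz))
  have hHA : ∀ x ∈ H, A.mulVec x ∈ H := by
    intro x hx
    have hcont : Continuous fun y : Fin d → ℝ => A.mulVec y :=
      LinearMap.continuous_of_finiteDimensional A.mulVecLin
    exact map_mem_closure hcont hx (fun y hy => hSA y hy)
  have hWA : ∀ x ∈ W, A.mulVec x ∈ W := by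
    intro x hx t
    have : t • A.mulVec x = A.mulVec (t • x) := (A.mulVecLin.map_smul t x).symm
    rw [this]
    exact hHA _ (hx t)
  -- integer basis vectors
  have hsingle : ∀ i : Fin d, Pi.single i (1:ℝ) ∈ ZdM := by
    intro i j
    refine ⟨if j = i then 1 else 0, ?_⟩
    rw [Pi.single_apply]
    split <;> simp
  -- Step 1 : W is spanned by its integer points
  have hWspan : W = Submodule.span ℝ ((ZdM : Set (Fin d → ℝ)) ∩ (W : Set (Fin d → ℝ))) :=
    W_eq_span_intPoints d H hHclosed ZdM hsingle (fun x hx => hSH _ (hZS _ hx)) W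
      (fun x => Iff.rfl)
  -- Step 2 : hence W = ⊤ by irreducibility
  have hWtop : W = ⊤ := by
    apply W_top_of_rational_point L hirr W hWA
    have hWne : W ≠ ⊥ := by
      obtain ⟨v, hvV, hv0⟩ := Submodule.exists_mem_ne_zero_of_ne_bot hV0
      intro hbot
      exact hv0 (by simpa [hbot] using hVW hvV)
    have hexist : ∃ x, x ∈ (ZdM : Set (Fin d → ℝ)) ∩ (W : Set (Fin d → ℝ)) ∧ x ≠ 0 := by
      by_contra hno
      push_neg at hno
      apply hWne
      rw [hWspan]
      exact (Submodule.span_eq_bot).mpr fun x hx => hno x hx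
    obtain ⟨x, ⟨hxZ, hxW⟩, hx0⟩ := hexist
    have hxZ' : ∀ i, ∃ n : ℤ, x i = (n : ℝ) := hxZ
    choose nn hnn using hxZ'
    refine ⟨fun i => ((nn i : ℤ) : ℚ), ?_, ?_⟩
    · have hxx : (fun i => (((nn i : ℤ) : ℚ) : ℝ)) = x := by
        funext i
        rw [hnn i]
        push_cast
        ring
      rw [hxx]
      exact hxW
    · intro h0
      apply hx0
      funext i
      have h1 := congrFun h0 i
      simp only [Pi.zero_apply] at h1
      have h2 : nn i = 0 := by exact_mod_cast h1
      rw [hnn i, h2]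
      simp
  -- conclude density
  have hHuniv : ∀ x : Fin d → ℝ, x ∈ H := fun x => hWH x (hWtop ▸ trivial)
  set proj : (Fin d → ℝ) → (Fin d → AddCircle (1:ℝ)) :=
    fun x => fun i => (x i : AddCircle (1:ℝ)) with hproj
  have hprojcont : Continuous proj :=
    continuous_pi fun i => (AddCircle.continuous_mk' 1).comp (continuous_apply i)
  intro y
  obtain ⟨x, hx⟩ : ∃ x : Fin d → ℝ, proj x = y := by
    have := fun i => QuotientAddGroup.mk'_surjective (AddSubgroup.zmultiples (1:ℝ)) (y i)
    choose x hx using this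
    exact ⟨x, funext hx⟩
  have hxH : x ∈ closure (S : Set (Fin d → ℝ)) := hHuniv x
  have hmaps : Set.MapsTo proj (S : Set (Fin d → ℝ)) (proj '' (V : Set (Fin d → ℝ))) := by
    intro s hs
    have hs' : s ∈ S := hs
    rw [hS, AddSubgroup.mem_sup] at hs'
    obtain ⟨v, hv, z, hz, rfl⟩ := hs'
    refine ⟨v, hv, ?_⟩
    funext i
    show (v i : AddCircle (1:ℝ)) = ((v + z) i : AddCircle (1:ℝ))
    rw [Pi.add_apply]
    have hz0 : ((z i : ℝ) : AddCircle (1:ℝ)) = 0 := by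
      obtain ⟨n, hn⟩ := hz i
      rw [hn, AddCircle.coe_eq_zero_iff]
      exact ⟨n, by simp⟩
    rw [AddCircle.coe_add, hz0, add_zero]
  rw [← hx]
  exact map_mem_closure hprojcont hxH hmaps
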